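/- In the restricted system ECC⁻, types are unique up to conversion: if Γ ⊢ M : A and Γ ⊢ M : A' are both derivable in ECC⁻, then A ≃ A'. -/

import Mathlib

namespace ECC

/-- Terms of Luo's Extended Calculus of Constructions, in de Bruijn representation. -/
inductive Term : Type
  | var   : ℕ → Term
  | prop  : Term
  | type  : ℕ → Term
  | pi    : Term → Term → Term
  | sigma : Term → Term → Term
  | lam   : Term → Term → Term
  | app   : Term → Term → Term
  | pair  : Term → Term → Term → Term   -- ⟨M, N⟩_B with type annotation B
  | proj1 : Term → Term
  | proj2 : Term → Term
deriving DecidableEq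

/-- Lift (shift by `d`) all de Bruijn indices ≥ `k`. -/
def lift (d : ℕ) : ℕ → Term → Term
  | k, .var n       => if n < k then .var n else .var (n + d)
  | _, .prop        => .prop
  | _, .type j      => .type j
  | k, .pi A B      => .pi (lift d k A) (lift d (k+1) B)
  | k, .sigma A B   => .sigma (lift d k A) (lift d (k+1) B)
  | k, .lam A M     => .lam (lift d k A) (lift d (k+1) M)
  | k, .app M N     => .app (lift d k M) (lift d k N)
  | k, .pair M N B  => .pair (lift d k M) (lift d k N) (lift d k B)
  | k, .proj1 M     => .proj1 (lift d k M)
  | k, .proj2 M     => .proj2 (lift d k M)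

/-- Capture-avoiding substitution `[N/x]A` of the term `N` for the variable `x` in `A`. -/
def subst (N : Term) : ℕ → Term → Term
  | k, .var n       => if n < k then .var n else if n = k then lift k 0 N else .var (n - 1)
  | _, .prop        => .prop
  | _, .type j      => .type j
  | k, .pi A B      => .pi (subst N k A) (subst N (k+1) B)
  | k, .sigma A B   => .sigma (subst N k A) (subst N (k+1) B)
  | k, .lam A M     => .lam (subst N k A) (subst N (k+1) M)
  | k, .app M M'    => .app (subst N k M) (subst N k M')
  | k, .pair M M' B => .pair (subst N k M) (subst N k M') (subst N k B)
  | k, .proj1 M     => .proj1 (subst N k M)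
  | k, .proj2 M     => .proj2 (subst N k M)

/-- `[N/x₀]B` : substitution for the outermost bound variable. -/
def subst0 (B N : Term) : Term := subst N 0 B

/-- One-step reduction (β together with the projection reductions, closed under all
term-formation congruences). -/
inductive Red : Term → Term → Prop
  | beta    : Red (.app (.lam A M) N) (subst0 M N)
  | pr1     : Red (.proj1 (.pair M N B)) M
  | pr2     : Red (.proj2 (.pair M N B)) N
  | piL     : Red A A' → Red (.pi A B) (.pi A' B)
  | piR     : Red B B' → Red (.pi A B) (.pi A B')
  | sigmaL  : Red A A' → Red (.sigma A B) (.sigma A' B)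
  | sigmaR  : Red B B' → Red (.sigma A B) (.sigma A B')
  | lamL    : Red A A' → Red (.lam A M) (.lam A' M)
  | lamR    : Red M M' → Red (.lam A M) (.lam A M')
  | appL    : Red M M' → Red (.app M N) (.app M' N)
  | appR    : Red N N' → Red (.app M N) (.app M N')
  | pairL   : Red M M' → Red (.pair M N B) (.pair M' N B)
  | pairR   : Red N N' → Red (.pair M N B) (.pair M N' B)
  | pairB   : Red B B' → Red (.pair M N B) (.pair M N B')
  | proj1C  : Red M M' → Red (.proj1 M) (.proj1 M')
  | proj2C  : Red M M' → Red (.proj2 M) (.proj2 M')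

/-- Conversion `≃` : the equivalence relation generated by reduction. -/
def Conv : Term → Term → Prop := Relation.EqvGen Red

/-- `A` has a normal form. -/
def HasNF (A : Term) : Prop :=
  ∃ B, Relation.ReflTransGen Red A B ∧ ∀ C, ¬ Red B C

/-- `𝒯` : the set of normalisable terms. -/
def Tset : Set Term := {A | HasNF A}

/-- Universes are `Prop` and the `Type_j`. -/
def IsUniv (T : Term) : Prop := T = .prop ∨ ∃ j, T = .type j

/-- The cumulativity relation `⪯` : the smallest preorder containing conversion,
the universe order, congruence for Π in the codomain, and congruence for Σ in both
components. -/
inductive Cum : Term → Term → Prop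
  | conv     : Conv A B → Cum A B
  | propType : Cum .prop (.type 0)
  | typeType : j ≤ k → Cum (.type j) (.type k)
  | pi       : Conv A A' → Cum B B' → Cum (.pi A B) (.pi A' B')
  | sigma    : Cum A A' → Cum B B' → Cum (.sigma A B) (.sigma A' B')
  | trans    : Cum A B → Cum B C → Cum A C

/-- The strict cumulativity relation `≺` : `A ⪯ B` and `A ≄ B`. -/
def SCum (A B : Term) : Prop := Cum A B ∧ ¬ Conv A B

/-- The stratified cumulativity relations `⪯ᵢ`. -/
inductive CumL : ℕ → Term → Term → Prop
  | conv     : Conv A B → CumL i A B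
  | propType : CumL i .prop (.type j)
  | typeType : j < k → CumL i (.type j) (.type k)
  | succ     : CumL i A B → CumL (i+1) A B
  | pi       : Conv M (.pi A B) → Conv N (.pi A' B') → Conv A A' → CumL i B B' →
               CumL (i+1) M N
  | sigma    : Conv M (.sigma A B) → Conv N (.sigma A' B') → CumL i A A' → CumL i B B' →
               CumL (i+1) M N

/-- Strict stratified cumulativity `≺ᵢ`. -/
def SCumL (i : ℕ) (A B : Term) : Prop := CumL i A B ∧ ¬ Conv A B

/-- Is the outermost symbol of a term Π or Σ? -/
def BinderHeaded : Term → Prop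
  | .pi _ _    => True
  | .sigma _ _ => True
  | _          => False

/-- The base stratum: normalisable terms not convertible to a binder-headed
normalisable term. -/
def Base : Set Term :=
  {T | HasNF T ∧ ¬ ∃ B, HasNF B ∧ BinderHeaded B ∧ Conv T B}

/-- The stratification `(Π_n, Σ_n)` of `𝒯`. -/
def Strata : ℕ → Set Term × Set Term
  | 0 => (Base, Base)
  | n+1 =>
    ({T | ∃ k l, ∃ _ : k + l = n, ∃ A B, HasNF (Term.pi A B) ∧ Conv T (Term.pi A B) ∧
        A ∈ (Strata k).1 ∪ (Strata k).2 ∧ B ∈ (Strata l).1 ∪ (Strata l).2},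
     {T | ∃ k l, ∃ _ : k + l = n, ∃ A B, HasNF (Term.sigma A B) ∧ Conv T (Term.sigma A B) ∧
        A ∈ (Strata k).1 ∪ (Strata k).2 ∧ B ∈ (Strata l).1 ∪ (Strata l).2})
termination_by n => n
decreasing_by all_goals omega

/-- The stratum `Π_n`. -/
def PiStr (n : ℕ) : Set Term := (Strata n).1

/-- The stratum `Σ_n`. -/
def SigStr (n : ℕ) : Set Term := (Strata n).2

/-- The specification of the rank function `φ : 𝒯 → ω`. -/
def PhiSpec (φ : Term → ℕ) : Prop :=
  (∀ M N, HasNF M → HasNF N → Conv M N → φ M = φ N) ∧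
  (∀ T, HasNF T → Conv T .prop → φ T = 2) ∧
  (∀ T j, HasNF T → Conv T (.type j) → φ T = 3 + j) ∧
  (∀ T, T ∈ PiStr 0 → ¬ Conv T .prop → (∀ j, ¬ Conv T (.type j)) → φ T = 1) ∧
  (∀ T A B, HasNF T → (Conv T (.pi A B) ∨ Conv T (.sigma A B)) → φ T = φ A * φ B) ∧
  (∀ T, HasNF T → 0 < φ T)

mutual
/-- Valid contexts of ECC (de Bruijn: the head of the list is the most recent entry). -/
inductive Valid : List Term → Prop
  | nil  : Valid []
  | cons : Typing Γ A (.type j) → Valid (A :: Γ)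

/-- The typing judgement `Γ ⊢ M : A` of ECC. -/
inductive Typing : List Term → Term → Term → Prop
  | prop  : Valid Γ → Typing Γ .prop (.type 0)
  | type  : Valid Γ → Typing Γ (.type j) (.type (j+1))
  | var   : Valid Γ → Γ[n]? = some A → Typing Γ (.var n) (lift (n+1) 0 A)
  | pi1   : Typing Γ A (.type j) → Typing (A :: Γ) B .prop →
            Typing Γ (.pi A B) .prop
  | pi2   : Typing Γ A (.type j) → Typing (A :: Γ) B (.type j) →
            Typing Γ (.pi A B) (.type j)
  | sig   : Typing Γ A (.type j) → Typing (A :: Γ) B (.type j) →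
            Typing Γ (.sigma A B) (.type j)
  | lam   : Typing (A :: Γ) M B → Typing Γ (.lam A M) (.pi A B)
  | app   : Typing Γ M (.pi A B) → Typing Γ N A → Typing Γ (.app M N) (subst0 B N)
  | pair  : Typing Γ M A → Typing Γ N (subst0 B M) → Typing (A :: Γ) B (.type j) →
            Typing Γ (.pair M N (.sigma A B)) (.sigma A B)
  | proj1 : Typing Γ M (.sigma A B) → Typing Γ (.proj1 M) A
  | proj2 : Typing Γ M (.sigma A B) → Typing Γ (.proj2 M) (subst0 B (.proj1 M))
  | cum   : Typing Γ M A → Typing Γ B (.type j) → Cum A B → Typing Γ M B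
end

/-- `Type_j` for `j ∈ ℤ`, with the convention `Type_{-1} = Prop`. -/
def TType (j : ℤ) : Term := if j < 0 then .prop else .type j.toNat

/-- The typing judgement of the restricted system `ECC⁻`: the rules
`(Π2)(Σ)(app)(pair)(⪯)` of ECC are replaced by `(Π2')(Σ')(app')(pair')` and `(≃)_ρ`. -/
inductive TypingM : List Term → Term → Term → Prop
  | prop  : Valid Γ → TypingM Γ .prop (.type 0)
  | type  : Valid Γ → TypingM Γ (.type j) (.type (j+1))
  | var   : Valid Γ → Γ[n]? = some A → TypingM Γ (.var n) (lift (n+1) 0 A)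
  | pi1   : TypingM Γ A (.type j) → TypingM (A :: Γ) B .prop →
            TypingM Γ (.pi A B) .prop
  | pi2'  : TypingM Γ A (TType j) → TypingM (A :: Γ) B (TType k) → 0 ≤ k →
            TypingM Γ (.pi A B) (TType (max (max j k) 0))
  | sig'  : TypingM Γ A (TType j) → TypingM (A :: Γ) B (TType k) →
            TypingM Γ (.sigma A B) (TType (max (max j k) 0))
  | lam   : TypingM (A :: Γ) M B → TypingM Γ (.lam A M) (.pi A B)
  | app'  : TypingM Γ M (.pi A B) → TypingM Γ N A' → Cum A' A →
            TypingM Γ (.app M N) (subst0 B N)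
  | pair' : TypingM Γ M A → TypingM Γ N C → TypingM (A' :: Γ) B' (.type j) →
            Cum A A' → Cum C (subst0 B' M) →
            TypingM Γ (.pair M N (.sigma A' B')) (.sigma A' B')
  | proj1 : TypingM Γ M (.sigma A B) → TypingM Γ (.proj1 M) A
  | proj2 : TypingM Γ M (.sigma A B) → TypingM Γ (.proj2 M) (subst0 B (.proj1 M))
  | conv  : TypingM Γ M A → Conv A A' → Typing Γ A' (.type j) → TypingM Γ M A'


set_option maxHeartbeats 1000000

/-! ### Substitution calculus lemmas -/

theorem lift_zero (k : ℕ) (t : Term) : lift 0 k t = t := by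
  induction t generalizing k <;> simp [lift, *]

theorem lift_lift_lo (N : Term) (i₀ i d m : ℕ) (h1 : i₀ ≤ i) (h2 : i ≤ i₀ + m) :
    lift d i (lift m i₀ N) = lift (d + m) i₀ N := by
  induction N generalizing i₀ i with
  | var n =>
    simp only [lift]
    split_ifs <;> (try simp only [lift]) <;> (try split_ifs) <;>
      first | rfl | omega | (exact congrArg Term.var (by omega))
  | _ =>
    simp only [lift] <;> congr 1 <;> (try simp only [Nat.add_right_comm _ _ 1]) <;>
      apply_assumption <;> omega

theorem lift_lift_hi (N : Term) (i₀ i d m : ℕ) (h1 : i₀ ≤ i) :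
    lift d (i + m) (lift m i₀ N) = lift m i₀ (lift d i N) := by
  induction N generalizing i₀ i with
  | var n =>
    simp only [lift]
    split_ifs <;> (try simp only [lift]) <;> (try split_ifs) <;>
      (try simp only [lift]) <;> (try split_ifs) <;>
      first | rfl | omega | (exact congrArg Term.var (by omega))
  | _ =>
    simp only [lift] <;> congr 1 <;> (try simp only [Nat.add_right_comm _ _ 1]) <;>
      apply_assumption <;> omega

theorem subst_lift_cancel (Q N : Term) (i j d : ℕ) (h1 : i ≤ j) (h2 : j ≤ i + d) :
    subst Q j (lift (d+1) i N) = lift d i N := by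
  induction N generalizing i j with
  | var n =>
    simp only [lift, subst]
    split_ifs <;> (try simp only [lift, subst]) <;> (try split_ifs) <;>
      first | rfl | omega | (exact congrArg Term.var (by omega))
  | _ =>
    simp only [lift, subst] <;> congr 1 <;> apply_assumption <;> omega

theorem lift_subst (P M : Term) (d i j : ℕ) :
    lift d (i + j) (subst P j M) = subst (lift d i P) j (lift d (i + j + 1) M) := by
  induction M generalizing j with
  | var n =>
    simp only [lift, subst]
    split_ifs <;> (try simp only [lift, subst]) <;> (try split_ifs) <;>
      (try simp only [lift, subst]) <;> (try split_ifs) <;>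
      first
      | rfl | omega | (exact congrArg Term.var (by omega))
      | (exact lift_lift_hi P 0 i d j (Nat.zero_le _))
  | _ =>
    simp only [lift, subst] <;> congr 1 <;>
      (try rw [show i + j + 1 = i + (j+1) from rfl]) <;> apply_assumption

theorem subst_lift_comm (N P : Term) (d i m : ℕ) (h1 : i ≤ m) :
    subst N (d + m) (lift d i P) = lift d i (subst N m P) := by
  induction P generalizing i m with
  | var n =>
    simp only [lift, subst]
    split_ifs <;> (try simp only [lift, subst]) <;> (try split_ifs) <;>
      (try simp only [lift, subst]) <;> (try split_ifs) <;>
      first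
      | rfl | omega | (exact congrArg Term.var (by omega))
      | (exact (lift_lift_lo N 0 i d m (Nat.zero_le _) (by omega)).symm)
  | _ =>
    simp only [lift, subst] <;> congr 1 <;>
      (try rw [show d + m + 1 = d + (m+1) from rfl]) <;> apply_assumption <;> omega

theorem subst_subst (N P M : Term) (k j : ℕ) :
    subst N (k + j) (subst P j M) = subst (subst N k P) j (subst N (k + j + 1) M) := by
  induction M generalizing j with
  | var n =>
    simp only [subst]
    split_ifs <;> (try simp only [lift, subst]) <;> (try split_ifs) <;>
      (try simp only [lift, subst]) <;> (try split_ifs) <;>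
      first
      | rfl | omega | (exact congrArg Term.var (by omega))
      | (rw [show k + j = j + k from Nat.add_comm k j];
         exact subst_lift_comm N P j 0 k (Nat.zero_le _))
      | (exact (subst_lift_cancel (subst N k P) N 0 j (k + j) (Nat.zero_le _) (by omega)).symm)
  | _ =>
    simp only [subst] <;> congr 1 <;>
      (try rw [show k + j + 1 = k + (j+1) from rfl]) <;> apply_assumption

theorem subst0_subst (N P M : Term) (k : ℕ) :
    subst N k (subst0 M P) = subst0 (subst N (k+1) M) (subst N k P) := by
  simpa [subst0] using subst_subst N P M k 0

theorem lift_subst0 (P M : Term) (d i : ℕ) :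
    lift d i (subst0 M P) = subst0 (lift d (i+1) M) (lift d i P) := by
  simpa [subst0] using lift_subst P M d i 0

/-! ### Reduction under substitution and lifting -/

theorem Red.subst_stable {M M' : Term} (h : Red M M') (N : Term) (k : ℕ) :
    Red (subst N k M) (subst N k M') := by
  induction h generalizing k with
  | @beta A M₀ N₀ =>
    rw [subst0_subst]
    exact Red.beta
  | pr1 => exact Red.pr1
  | pr2 => exact Red.pr2
  | piL _ ih => exact Red.piL (ih k)
  | piR _ ih => exact Red.piR (ih (k+1))
  | sigmaL _ ih => exact Red.sigmaL (ih k)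
  | sigmaR _ ih => exact Red.sigmaR (ih (k+1))
  | lamL _ ih => exact Red.lamL (ih k)
  | lamR _ ih => exact Red.lamR (ih (k+1))
  | appL _ ih => exact Red.appL (ih k)
  | appR _ ih => exact Red.appR (ih k)
  | pairL _ ih => exact Red.pairL (ih k)
  | pairR _ ih => exact Red.pairR (ih k)
  | pairB _ ih => exact Red.pairB (ih k)
  | proj1C _ ih => exact Red.proj1C (ih k)
  | proj2C _ ih => exact Red.proj2C (ih k)

/-! ### Conversion basics -/

theorem Conv.refl (A : Term) : Conv A A := Relation.EqvGen.refl A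
theorem Conv.symm {A B : Term} (h : Conv A B) : Conv B A := Relation.EqvGen.symm _ _ h
theorem Conv.trans {A B C : Term} (h : Conv A B) (h' : Conv B C) : Conv A C :=
  Relation.EqvGen.trans _ _ _ h h'
theorem Conv.of_red {A B : Term} (h : Red A B) : Conv A B := Relation.EqvGen.rel _ _ h

theorem Conv.map {f : Term → Term} (hf : ∀ a b, Red a b → Red (f a) (f b))
    {A B : Term} (h : Conv A B) : Conv (f A) (f B) := by
  induction h with
  | rel a b hab => exact Conv.of_red (hf _ _ hab)
  | refl a => exact Conv.refl _
  | symm a b _ ih => exact ih.symm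
  | trans a b c _ _ ih1 ih2 => exact ih1.trans ih2

theorem Conv.subst0_stable {B B' : Term} (N : Term) (h : Conv B B') :
    Conv (subst0 B N) (subst0 B' N) :=
  Conv.map (f := fun t => subst N 0 t) (fun _ _ hr => hr.subst_stable N 0) h

theorem Conv.pi_right {A B B' : Term} (h : Conv B B') : Conv (.pi A B) (.pi A B') :=
  Conv.map (f := fun t => .pi A t) (fun _ _ hr => Red.piR hr) h

/-! ### Parallel reduction -/

inductive Par : Term → Term → Prop
  | var   : Par (.var n) (.var n)
  | prop  : Par .prop .prop
  | type  : Par (.type j) (.type j)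
  | beta  : Par M M' → Par N N' → Par (.app (.lam A M) N) (subst0 M' N')
  | pr1   : Par M M' → Par (.proj1 (.pair M N B)) M'
  | pr2   : Par N N' → Par (.proj2 (.pair M N B)) N'
  | pi    : Par A A' → Par B B' → Par (.pi A B) (.pi A' B')
  | sigma : Par A A' → Par B B' → Par (.sigma A B) (.sigma A' B')
  | lam   : Par A A' → Par M M' → Par (.lam A M) (.lam A' M')
  | app   : Par M M' → Par N N' → Par (.app M N) (.app M' N')
  | pair  : Par M M' → Par N N' → Par B B' → Par (.pair M N B) (.pair M' N' B')
  | proj1 : Par M M' → Par (.proj1 M) (.proj1 M')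
  | proj2 : Par M M' → Par (.proj2 M) (.proj2 M')

theorem Par.refl (t : Term) : Par t t := by
  induction t with
  | var n => exact Par.var
  | prop => exact Par.prop
  | type j => exact Par.type
  | pi A B ihA ihB => exact Par.pi ihA ihB
  | sigma A B ihA ihB => exact Par.sigma ihA ihB
  | lam A M ihA ihM => exact Par.lam ihA ihM
  | app M N ihM ihN => exact Par.app ihM ihN
  | pair M N B ihM ihN ihB => exact Par.pair ihM ihN ihB
  | proj1 M ih => exact Par.proj1 ih
  | proj2 M ih => exact Par.proj2 ih

theorem Par.of_red {M N : Term} (h : Red M N) : Par M N := by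
  induction h with
  | beta => exact Par.beta (Par.refl _) (Par.refl _)
  | pr1 => exact Par.pr1 (Par.refl _)
  | pr2 => exact Par.pr2 (Par.refl _)
  | piL _ ih => exact Par.pi ih (Par.refl _)
  | piR _ ih => exact Par.pi (Par.refl _) ih
  | sigmaL _ ih => exact Par.sigma ih (Par.refl _)
  | sigmaR _ ih => exact Par.sigma (Par.refl _) ih
  | lamL _ ih => exact Par.lam ih (Par.refl _)
  | lamR _ ih => exact Par.lam (Par.refl _) ih
  | appL _ ih => exact Par.app ih (Par.refl _)
  | appR _ ih => exact Par.app (Par.refl _) ih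
  | pairL _ ih => exact Par.pair ih (Par.refl _) (Par.refl _)
  | pairR _ ih => exact Par.pair (Par.refl _) ih (Par.refl _)
  | pairB _ ih => exact Par.pair (Par.refl _) (Par.refl _) ih
  | proj1C _ ih => exact Par.proj1 ih
  | proj2C _ ih => exact Par.proj2 ih

/-- Multi-step reduction. -/
def Rs : Term → Term → Prop := Relation.ReflTransGen Red

theorem Rs.map {f : Term → Term} (hf : ∀ a b, Red a b → Red (f a) (f b))
    {A B : Term} (h : Rs A B) : Rs (f A) (f B) :=
  Relation.ReflTransGen.lift f hf _ _ h

theorem rs_app {M M' N N' : Term} (h1 : Rs M M') (h2 : Rs N N') :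
    Rs (.app M N) (.app M' N') :=
  Relation.ReflTransGen.trans
    (Rs.map (f := fun t => .app t N) (fun _ _ => Red.appL) h1)
    (Rs.map (f := fun t => .app M' t) (fun _ _ => Red.appR) h2)

theorem rs_pi {M M' N N' : Term} (h1 : Rs M M') (h2 : Rs N N') :
    Rs (.pi M N) (.pi M' N') :=
  Relation.ReflTransGen.trans
    (Rs.map (f := fun t => .pi t N) (fun _ _ => Red.piL) h1)
    (Rs.map (f := fun t => .pi M' t) (fun _ _ => Red.piR) h2)

theorem rs_sigma {M M' N N' : Term} (h1 : Rs M M') (h2 : Rs N N') :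
    Rs (.sigma M N) (.sigma M' N') :=
  Relation.ReflTransGen.trans
    (Rs.map (f := fun t => .sigma t N) (fun _ _ => Red.sigmaL) h1)
    (Rs.map (f := fun t => .sigma M' t) (fun _ _ => Red.sigmaR) h2)

theorem rs_lam {M M' N N' : Term} (h1 : Rs M M') (h2 : Rs N N') :
    Rs (.lam M N) (.lam M' N') :=
  Relation.ReflTransGen.trans
    (Rs.map (f := fun t => .lam t N) (fun _ _ => Red.lamL) h1)
    (Rs.map (f := fun t => .lam M' t) (fun _ _ => Red.lamR) h2)

theorem rs_pair {M M' N N' B B' : Term} (h1 : Rs M M') (h2 : Rs N N') (h3 : Rs B B') :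
    Rs (.pair M N B) (.pair M' N' B') :=
  Relation.ReflTransGen.trans
    (Rs.map (f := fun t => .pair t N B) (fun _ _ => Red.pairL) h1)
    (Relation.ReflTransGen.trans
      (Rs.map (f := fun t => .pair M' t B) (fun _ _ => Red.pairR) h2)
      (Rs.map (f := fun t => .pair M' N' t) (fun _ _ => Red.pairB) h3))

theorem rs_proj1 {M M' : Term} (h : Rs M M') : Rs (.proj1 M) (.proj1 M') :=
  Rs.map (f := fun t => .proj1 t) (fun _ _ => Red.proj1C) h

theorem rs_proj2 {M M' : Term} (h : Rs M M') : Rs (.proj2 M) (.proj2 M') :=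
  Rs.map (f := fun t => .proj2 t) (fun _ _ => Red.proj2C) h

theorem Par.to_rs {M N : Term} (h : Par M N) : Rs M N := by
  induction h with
  | var => exact Relation.ReflTransGen.refl
  | prop => exact Relation.ReflTransGen.refl
  | type => exact Relation.ReflTransGen.refl
  | @beta M M' N N' A _ _ ihM ihN =>
    exact Relation.ReflTransGen.tail
      (rs_app (rs_lam Relation.ReflTransGen.refl ihM) ihN) Red.beta
  | @pr1 M M' N B _ ihM =>
    exact Relation.ReflTransGen.tail
      (rs_proj1 (rs_pair ihM Relation.ReflTransGen.refl Relation.ReflTransGen.refl)) Red.pr1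
  | @pr2 N N' M B _ ihN =>
    exact Relation.ReflTransGen.tail
      (rs_proj2 (rs_pair Relation.ReflTransGen.refl ihN Relation.ReflTransGen.refl)) Red.pr2
  | pi _ _ ih1 ih2 => exact rs_pi ih1 ih2
  | sigma _ _ ih1 ih2 => exact rs_sigma ih1 ih2
  | lam _ _ ih1 ih2 => exact rs_lam ih1 ih2
  | app _ _ ih1 ih2 => exact rs_app ih1 ih2
  | pair _ _ _ ih1 ih2 ih3 => exact rs_pair ih1 ih2 ih3
  | proj1 _ ih => exact rs_proj1 ih
  | proj2 _ ih => exact rs_proj2 ih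

theorem Par.lift_stable {M M' : Term} (h : Par M M') (d i : ℕ) :
    Par (lift d i M) (lift d i M') := by
  induction h generalizing i with
  | var => simp only [lift]; split <;> exact Par.var
  | prop => exact Par.prop
  | type => exact Par.type
  | beta _ _ ihM ihN =>
    simp only [lift]
    rw [lift_subst0]
    exact Par.beta (ihM (i+1)) (ihN i)
  | pr1 _ ih => exact Par.pr1 (ih i)
  | pr2 _ ih => exact Par.pr2 (ih i)
  | pi _ _ ih1 ih2 => exact Par.pi (ih1 i) (ih2 (i+1))
  | sigma _ _ ih1 ih2 => exact Par.sigma (ih1 i) (ih2 (i+1))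
  | lam _ _ ih1 ih2 => exact Par.lam (ih1 i) (ih2 (i+1))
  | app _ _ ih1 ih2 => exact Par.app (ih1 i) (ih2 i)
  | pair _ _ _ ih1 ih2 ih3 => exact Par.pair (ih1 i) (ih2 i) (ih3 i)
  | proj1 _ ih => exact Par.proj1 (ih i)
  | proj2 _ ih => exact Par.proj2 (ih i)

theorem Par.subst_stable {M M' N N' : Term} (h : Par M M') (hN : Par N N') (k : ℕ) :
    Par (subst N k M) (subst N' k M') := by
  induction h generalizing k with
  | @var n =>
    simp only [subst]
    split_ifs with h1 h2
    · exact Par.var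
    · exact hN.lift_stable k 0
    · exact Par.var
  | prop => exact Par.prop
  | type => exact Par.type
  | beta _ _ ihM ihN' =>
    simp only [subst]
    rw [subst0_subst]
    exact Par.beta (ihM (k+1)) (ihN' k)
  | pr1 _ ih => exact Par.pr1 (ih k)
  | pr2 _ ih => exact Par.pr2 (ih k)
  | pi _ _ ih1 ih2 => exact Par.pi (ih1 k) (ih2 (k+1))
  | sigma _ _ ih1 ih2 => exact Par.sigma (ih1 k) (ih2 (k+1))
  | lam _ _ ih1 ih2 => exact Par.lam (ih1 k) (ih2 (k+1))
  | app _ _ ih1 ih2 => exact Par.app (ih1 k) (ih2 k)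
  | pair _ _ _ ih1 ih2 ih3 => exact Par.pair (ih1 k) (ih2 k) (ih3 k)
  | proj1 _ ih => exact Par.proj1 (ih k)
  | proj2 _ ih => exact Par.proj2 (ih k)

theorem Par.subst0_stable {B B' N N' : Term} (hB : Par B B') (hN : Par N N') :
    Par (subst0 B N) (subst0 B' N') := hB.subst_stable hN 0

/-! ### Complete development and confluence -/

/-- The complete development of a term. -/
def cd : Term → Term
  | .var n => .var n
  | .prop => .prop
  | .type j => .type j
  | .pi A B => .pi (cd A) (cd B)
  | .sigma A B => .sigma (cd A) (cd B)
  | .lam A M => .lam (cd A) (cd M)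
  | .app (.lam _ M) N => subst0 (cd M) (cd N)
  | .app M N => .app (cd M) (cd N)
  | .pair M N B => .pair (cd M) (cd N) (cd B)
  | .proj1 (.pair M _ _) => cd M
  | .proj1 M => .proj1 (cd M)
  | .proj2 (.pair _ N _) => cd N
  | .proj2 M => .proj2 (cd M)

theorem Par.triangle {M N : Term} (h : Par M N) : Par N (cd M) := by
  induction h with
  | var => exact Par.var
  | prop => exact Par.prop
  | type => exact Par.type
  | beta _ _ ihM ihN => exact Par.subst0_stable ihM ihN
  | pr1 _ ih => exact ih
  | pr2 _ ih => exact ih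
  | pi _ _ ih1 ih2 => exact Par.pi ih1 ih2
  | sigma _ _ ih1 ih2 => exact Par.sigma ih1 ih2
  | lam _ _ ih1 ih2 => exact Par.lam ih1 ih2
  | @app M₁ M' N₁ N' hM hN ih1 ih2 =>
    cases M₁ with
    | lam A Mb =>
      cases hM with
      | lam hA hMb =>
        simp only [cd] at ih1 ⊢
        cases ih1 with
        | lam ih1A ih1M => exact Par.beta ih1M ih2
    | _ => exact Par.app ih1 ih2
  | pair _ _ _ ih1 ih2 ih3 => exact Par.pair ih1 ih2 ih3
  | @proj1 M₁ M' hM ih =>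
    cases M₁ with
    | pair Ma Mb Mc =>
      cases hM with
      | pair hMa hMb hMc =>
        simp only [cd] at ih ⊢
        cases ih with
        | pair ihA ihB ihC => exact Par.pr1 ihA
    | _ => exact Par.proj1 ih
  | @proj2 M₁ M' hM ih =>
    cases M₁ with
    | pair Ma Mb Mc =>
      cases hM with
      | pair hMa hMb hMc =>
        simp only [cd] at ih ⊢
        cases ih with
        | pair ihA ihB ihC => exact Par.pr2 ihB
    | _ => exact Par.proj2 ih

theorem rtpar_to_rs {M N : Term} (h : Relation.ReflTransGen Par M N) : Rs M N := by
  induction h with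
  | refl => exact Relation.ReflTransGen.refl
  | tail _ h2 ih => exact Relation.ReflTransGen.trans ih h2.to_rs

theorem conv_join {A B : Term} (h : Conv A B) : ∃ C, Rs A C ∧ Rs B C := by
  have hp : Relation.EqvGen Par A B := Relation.EqvGen.mono (fun _ _ hr => Par.of_red hr) _ _ h
  have equiv := Relation.equivalence_join_reflTransGen
    (r := Par)
    (fun a b c hab hac =>
      ⟨cd a, Relation.ReflGen.single hab.triangle, Relation.ReflTransGen.single hac.triangle⟩)
  have j : Relation.Join (Relation.ReflTransGen Par) A B := by
    clear h
    induction hp with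
    | rel a b hab => exact ⟨b, Relation.ReflTransGen.single hab, Relation.ReflTransGen.refl⟩
    | refl a => exact equiv.refl a
    | symm a b _ ih => exact equiv.symm ih
    | trans a b c _ _ ih1 ih2 => exact equiv.trans ih1 ih2
  obtain ⟨C, h1, h2⟩ := j
  exact ⟨C, rtpar_to_rs h1, rtpar_to_rs h2⟩

theorem rs_to_conv {A B : Term} (h : Rs A B) : Conv A B := by
  induction h with
  | refl => exact Conv.refl _
  | tail _ h2 ih => exact ih.trans (Conv.of_red h2)

/-! ### Inversion of reduction from head normal shapes -/

theorem rs_prop_inv {X : Term} (h : Rs .prop X) : X = .prop := by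
  induction h with
  | refl => rfl
  | tail _ h2 ih => subst ih; cases h2

theorem rs_type_inv {j : ℕ} {X : Term} (h : Rs (.type j) X) : X = .type j := by
  induction h with
  | refl => rfl
  | tail _ h2 ih => subst ih; cases h2

theorem rs_pi_inv {A B X : Term} (h : Rs (.pi A B) X) :
    ∃ A' B', X = .pi A' B' ∧ Rs A A' ∧ Rs B B' := by
  induction h with
  | refl => exact ⟨A, B, rfl, Relation.ReflTransGen.refl, Relation.ReflTransGen.refl⟩
  | tail _ h2 ih =>
    obtain ⟨A', B', rfl, hA, hB⟩ := ih
    cases h2 with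
    | piL hr => exact ⟨_, _, rfl, Relation.ReflTransGen.tail hA hr, hB⟩
    | piR hr => exact ⟨_, _, rfl, hA, Relation.ReflTransGen.tail hB hr⟩

theorem rs_sigma_inv {A B X : Term} (h : Rs (.sigma A B) X) :
    ∃ A' B', X = .sigma A' B' ∧ Rs A A' ∧ Rs B B' := by
  induction h with
  | refl => exact ⟨A, B, rfl, Relation.ReflTransGen.refl, Relation.ReflTransGen.refl⟩
  | tail _ h2 ih =>
    obtain ⟨A', B', rfl, hA, hB⟩ := ih
    cases h2 with
    | sigmaL hr => exact ⟨_, _, rfl, Relation.ReflTransGen.tail hA hr, hB⟩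
    | sigmaR hr => exact ⟨_, _, rfl, hA, Relation.ReflTransGen.tail hB hr⟩

/-! ### Consequences for conversion -/

theorem conv_prop_type {j : ℕ} (h : Conv .prop (.type j)) : False := by
  obtain ⟨C, h1, h2⟩ := conv_join h
  rw [rs_prop_inv h1] at h2
  exact absurd (rs_type_inv h2) (by simp)

theorem conv_type_type {j k : ℕ} (h : Conv (.type j) (.type k)) : j = k := by
  obtain ⟨C, h1, h2⟩ := conv_join h
  rw [rs_type_inv h1] at h2
  have := rs_type_inv h2
  exact Term.type.inj this

theorem conv_pi_pi {A B A' B' : Term} (h : Conv (.pi A B) (.pi A' B')) :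
    Conv A A' ∧ Conv B B' := by
  obtain ⟨C, h1, h2⟩ := conv_join h
  obtain ⟨A₂, B₂, rfl, hA, hB⟩ := rs_pi_inv h1
  obtain ⟨A₃, B₃, he, hA', hB'⟩ := rs_pi_inv h2
  injection he with e1 e2
  subst e1; subst e2
  exact ⟨(rs_to_conv hA).trans (rs_to_conv hA').symm,
         (rs_to_conv hB).trans (rs_to_conv hB').symm⟩

theorem conv_sigma_sigma {A B A' B' : Term} (h : Conv (.sigma A B) (.sigma A' B')) :
    Conv A A' ∧ Conv B B' := by
  obtain ⟨C, h1, h2⟩ := conv_join h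
  obtain ⟨A₂, B₂, rfl, hA, hB⟩ := rs_sigma_inv h1
  obtain ⟨A₃, B₃, he, hA', hB'⟩ := rs_sigma_inv h2
  injection he with e1 e2
  subst e1; subst e2
  exact ⟨(rs_to_conv hA).trans (rs_to_conv hA').symm,
         (rs_to_conv hB).trans (rs_to_conv hB').symm⟩

/-! ### Universe levels -/

theorem conv_ttype_eq {j k : ℤ} (h : Conv (TType j) (TType k)) : TType j = TType k := by
  unfold TType at h ⊢
  split_ifs at h ⊢ <;>
    first
    | rfl
    | (exact absurd h conv_prop_type)
    | (exact absurd h.symm conv_prop_type)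
    | (rw [conv_type_type h])

theorem ttype_max_aux {j j' : ℤ} (h : TType j = TType j') : max j 0 = max j' 0 := by
  unfold TType at h
  split_ifs at h with h1 h2 h2 <;>
    first
    | omega
    | (injection h with h3; omega)
    | injection h

theorem ttype_max_eq {j j' k k' : ℤ} (h1 : TType j = TType j') (h2 : TType k = TType k') :
    TType (max (max j k) 0) = TType (max (max j' k') 0) := by
  have a1 := ttype_max_aux h1
  have a2 := ttype_max_aux h2
  congr 1
  omega

/-! ### Conversion-free head derivations -/

/-- One structural (non-conversion) ECC⁻ rule applied to ECC⁻-typed premises. -/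
inductive Plain : List Term → Term → Term → Prop
  | prop  : Valid Γ → Plain Γ .prop (.type 0)
  | type  : Valid Γ → Plain Γ (.type j) (.type (j+1))
  | var   : Valid Γ → Γ[n]? = some A → Plain Γ (.var n) (lift (n+1) 0 A)
  | pi1   : TypingM Γ A (.type j) → TypingM (A :: Γ) B .prop →
            Plain Γ (.pi A B) .prop
  | pi2'  : TypingM Γ A (TType j) → TypingM (A :: Γ) B (TType k) → 0 ≤ k →
            Plain Γ (.pi A B) (TType (max (max j k) 0))
  | sig'  : TypingM Γ A (TType j) → TypingM (A :: Γ) B (TType k) →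
            Plain Γ (.sigma A B) (TType (max (max j k) 0))
  | lam   : TypingM (A :: Γ) M B → Plain Γ (.lam A M) (.pi A B)
  | app'  : TypingM Γ M (.pi A B) → TypingM Γ N A' → Cum A' A →
            Plain Γ (.app M N) (subst0 B N)
  | pair' : TypingM Γ M A → TypingM Γ N C → TypingM (A' :: Γ) B' (.type j) →
            Cum A A' → Cum C (subst0 B' M) →
            Plain Γ (.pair M N (.sigma A' B')) (.sigma A' B')
  | proj1 : TypingM Γ M (.sigma A B) → Plain Γ (.proj1 M) A
  | proj2 : TypingM Γ M (.sigma A B) → Plain Γ (.proj2 M) (subst0 B (.proj1 M))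

theorem TypingM.toPlain {Γ : List Term} {M A : Term} (h : TypingM Γ M A) :
    ∃ B, Plain Γ M B ∧ Conv B A := by
  induction h with
  | prop hv => exact ⟨_, Plain.prop hv, Conv.refl _⟩
  | type hv => exact ⟨_, Plain.type hv, Conv.refl _⟩
  | var hv hg => exact ⟨_, Plain.var hv hg, Conv.refl _⟩
  | pi1 h1 h2 => exact ⟨_, Plain.pi1 h1 h2, Conv.refl _⟩
  | pi2' h1 h2 hk => exact ⟨_, Plain.pi2' h1 h2 hk, Conv.refl _⟩
  | sig' h1 h2 => exact ⟨_, Plain.sig' h1 h2, Conv.refl _⟩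
  | lam h1 => exact ⟨_, Plain.lam h1, Conv.refl _⟩
  | app' h1 h2 h3 => exact ⟨_, Plain.app' h1 h2 h3, Conv.refl _⟩
  | pair' h1 h2 h3 h4 h5 => exact ⟨_, Plain.pair' h1 h2 h3 h4 h5, Conv.refl _⟩
  | proj1 h1 => exact ⟨_, Plain.proj1 h1, Conv.refl _⟩
  | proj2 h1 => exact ⟨_, Plain.proj2 h1, Conv.refl _⟩
  | conv h1 hc ht ih =>
    obtain ⟨B, hp, hc'⟩ := ih
    exact ⟨B, hp, hc'.trans hc⟩

theorem ttype_nonneg_type (k : ℤ) (hk : 0 ≤ k) : TType k = .type k.toNat := by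
  unfold TType; rw [if_neg (by omega)]

/-! ### Uniqueness of types in ECC⁻ -/

theorem typingM_unique {Γ : List Term} {M A : Term} (h : TypingM Γ M A) :
    ∀ A', TypingM Γ M A' → Conv A A' := by
  induction h with
  | conv h1 hc ht ih =>
    intro X h'
    exact (hc.symm).trans (ih X h')
  | prop hv =>
    intro X h'
    obtain ⟨B0, hp, hc⟩ := h'.toPlain
    cases hp with
    | prop => exact hc
  | type hv =>
    intro X h'
    obtain ⟨B0, hp, hc⟩ := h'.toPlain
    cases hp with
    | type => exact hc
  | var hv hg =>
    intro X h'
    obtain ⟨B0, hp, hc⟩ := h'.toPlain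
    cases hp with
    | var hv2 hg2 =>
      rw [hg] at hg2
      injection hg2 with e
      subst e
      exact hc
  | pi1 h1 h2 ih1 ih2 =>
    intro X h'
    obtain ⟨B0, hp, hc⟩ := h'.toPlain
    cases hp with
    | pi1 => exact hc
    | pi2' hA2 hB2 hk2 =>
      have hcv := ih2 _ hB2
      rw [ttype_nonneg_type _ hk2] at hcv
      exact absurd hcv conv_prop_type
  | pi2' h1 h2 hk ih1 ih2 =>
    intro X h'
    obtain ⟨B0, hp, hc⟩ := h'.toPlain
    cases hp with
    | pi1 hA2 hB2 =>
      have hcv := ih2 _ hB2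
      rw [ttype_nonneg_type _ hk] at hcv
      exact absurd hcv.symm conv_prop_type
    | pi2' hA2 hB2 hk2 =>
      have e1 := conv_ttype_eq (ih1 _ hA2)
      have e2 := conv_ttype_eq (ih2 _ hB2)
      rw [ttype_max_eq e1 e2]
      exact hc
  | sig' h1 h2 ih1 ih2 =>
    intro X h'
    obtain ⟨B0, hp, hc⟩ := h'.toPlain
    cases hp with
    | sig' hA2 hB2 =>
      have e1 := conv_ttype_eq (ih1 _ hA2)
      have e2 := conv_ttype_eq (ih2 _ hB2)
      rw [ttype_max_eq e1 e2]
      exact hc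
  | lam h1 ih1 =>
    intro X h'
    obtain ⟨B0, hp, hc⟩ := h'.toPlain
    cases hp with
    | lam hM2 => exact (Conv.pi_right (ih1 _ hM2)).trans hc
  | app' h1 h2 h3 ih1 ih2 =>
    intro X h'
    obtain ⟨B0, hp, hc⟩ := h'.toPlain
    cases hp with
    | app' hM2 hN2 hc2 =>
      have hcv := conv_pi_pi (ih1 _ hM2)
      exact (Conv.subst0_stable _ hcv.2).trans hc
  | pair' h1 h2 h3 h4 h5 ih1 ih2 ih3 =>
    intro X h'
    obtain ⟨B0, hp, hc⟩ := h'.toPlain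
    cases hp with
    | pair' => exact hc
  | proj1 h1 ih1 =>
    intro X h'
    obtain ⟨B0, hp, hc⟩ := h'.toPlain
    cases hp with
    | proj1 hM2 =>
      have hcv := conv_sigma_sigma (ih1 _ hM2)
      exact hcv.1.trans hc
  | proj2 h1 ih1 =>
    intro X h'
    obtain ⟨B0, hp, hc⟩ := h'.toPlain
    cases hp with
    | proj2 hM2 =>
      have hcv := conv_sigma_sigma (ih1 _ hM2)
      exact (Conv.subst0_stable _ hcv.2).trans hc
end ECC

/-- in the restricted system `ECC⁻`, types are unique up to conversion:
if `Γ ⊢ M : A` and `Γ ⊢ M : A'` are both derivable in `ECC⁻`, then `A ≃ A'`. -/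
theorem eccMinus_type_unique {Γ : List ECC.Term} {M A A' : ECC.Term}
    (h : ECC.TypingM Γ M A) (h' : ECC.TypingM Γ M A') : ECC.Conv A A' :=
  ECC.typingM_unique h A' h'
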